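/- For all matrices A, B ∈ Matrix (Fin n) (Fin n) R, the operators satisfy T_A ∘ T_B = T_{A+B} and T_0 = id on MvPolynomial (Fin n) R; consequently each T_A is an R-linear automorphism of MvPolynomial (Fin n) R with inverse T_{−A}. -/

import Mathlib

open MvPolynomial

/-- The second-order operator `Γ_A = (1/2) Σ_{i,j} A_{ij} ∂_i ∂_j`. -/
noncomputable def gammaOp {n : ℕ} {R : Type*} [CommRing R] [Algebra ℚ R]
    (A : Matrix (Fin n) (Fin n) R) (f : MvPolynomial (Fin n) R) :
    MvPolynomial (Fin n) R :=
  (2 : ℚ)⁻¹ • ∑ i : Fin n, ∑ j : Fin n, A i j • pderiv i (pderiv j f)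

/-- The operator `T_A = Σ_m (1/m!) Γ_A^m`. -/
noncomputable def topT {n : ℕ} {R : Type*} [CommRing R] [Algebra ℚ R]
    (A : Matrix (Fin n) (Fin n) R) (f : MvPolynomial (Fin n) R) :
    MvPolynomial (Fin n) R :=
  ∑ᶠ m : ℕ, (m.factorial : ℚ)⁻¹ • (gammaOp A)^[m] f

namespace TopTAux

variable {n : ℕ} {R : Type*} [CommRing R] [Algebra ℚ R]

lemma pderiv_pderiv_comm (i j : Fin n) (f : MvPolynomial (Fin n) R) :
    pderiv i (pderiv j f) = pderiv j (pderiv i f) := by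
  induction f using MvPolynomial.induction_on' with
  | add p q hp hq => simp [map_add, hp, hq]
  | monomial s a =>
    rcases eq_or_ne i j with rfl | hij
    · rfl
    · simp only [pderiv_monomial]
      have h1 : (s - Finsupp.single j 1 : Fin n →₀ ℕ) i = s i := by
        rw [Finsupp.tsub_apply, Finsupp.single_apply, if_neg (Ne.symm hij)]
        omega
      have h2 : (s - Finsupp.single i 1 : Fin n →₀ ℕ) j = s j := by
        rw [Finsupp.tsub_apply, Finsupp.single_apply, if_neg hij]
        omega
      have h3 : s - Finsupp.single j 1 - Finsupp.single i 1
          = s - Finsupp.single i 1 - Finsupp.single j 1 := by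
        ext k
        simp only [Finsupp.tsub_apply, Finsupp.single_apply]
        omega
      rw [h1, h2, h3, mul_right_comm]

/-- `Γ_A` as an `R`-linear endomorphism. -/
noncomputable def GOp (A : Matrix (Fin n) (Fin n) R) :
    Module.End R (MvPolynomial (Fin n) R) :=
  (2 : ℚ)⁻¹ • ∑ i : Fin n, ∑ j : Fin n,
    A i j • ((pderiv i).toLinearMap ∘ₗ (pderiv j).toLinearMap)

lemma GOp_apply (A : Matrix (Fin n) (Fin n) R) (f : MvPolynomial (Fin n) R) :
    GOp A f = gammaOp A f := by
  simp [GOp, gammaOp, LinearMap.smul_apply, LinearMap.sum_apply]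

lemma GOp_coe (A : Matrix (Fin n) (Fin n) R) : ⇑(GOp A) = gammaOp A :=
  funext (GOp_apply A)

lemma GOp_add (A B : Matrix (Fin n) (Fin n) R) : GOp (A + B) = GOp A + GOp B := by
  unfold GOp
  rw [← smul_add, ← Finset.sum_add_distrib]
  congr 1
  refine Finset.sum_congr rfl fun i _ => ?_
  rw [← Finset.sum_add_distrib]
  refine Finset.sum_congr rfl fun j _ => ?_
  rw [Matrix.add_apply, add_smul]

lemma GOp_commute (A B : Matrix (Fin n) (Fin n) R) : Commute (GOp A) (GOp B) := by
  unfold GOp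
  refine (Commute.smul_left ?_ _).smul_right _
  refine Commute.sum_left _ _ _ fun i _ => Commute.sum_right _ _ _ fun k _ => ?_
  refine Commute.sum_left _ _ _ fun j _ => Commute.sum_right _ _ _ fun l _ => ?_
  refine (Commute.smul_left ?_ _).smul_right _
  have h : ∀ a b : Fin n,
      Commute ((pderiv a).toLinearMap ∘ₗ (pderiv b).toLinearMap :
        Module.End R (MvPolynomial (Fin n) R)) ((pderiv a).toLinearMap ∘ₗ (pderiv b).toLinearMap) :=
    fun a b => Commute.refl _
  have hD : ∀ a b : Fin n,
      Commute ((pderiv a).toLinearMap : Module.End R (MvPolynomial (Fin n) R))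
        (pderiv b).toLinearMap := fun a b =>
    LinearMap.ext fun f => pderiv_pderiv_comm a b f
  have hcomp : ∀ a b : Fin n,
      ((pderiv a).toLinearMap ∘ₗ (pderiv b).toLinearMap :
        Module.End R (MvPolynomial (Fin n) R)) =
      ((pderiv a).toLinearMap : Module.End R (MvPolynomial (Fin n) R)) * (pderiv b).toLinearMap :=
    fun a b => rfl
  rw [hcomp, hcomp]
  exact ((hD i k).mul_right (hD i l)).mul_left ((hD j k).mul_right (hD j l))

lemma totalDegree_pderiv_le (i : Fin n) (f : MvPolynomial (Fin n) R) :
    (pderiv i f).totalDegree ≤ f.totalDegree - 1 := by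
  conv_lhs => rw [f.as_sum]
  rw [map_sum]
  refine (totalDegree_finset_sum _ _).trans (Finset.sup_le fun m hm => ?_)
  rw [pderiv_monomial]
  by_cases hmi : m i = 0
  · simp [hmi]
  · refine (totalDegree_monomial_le _ _).trans ?_
    simp only [Function.id_def]
    have hadd : (m - Finsupp.single i 1) + Finsupp.single i 1 = m := by
      ext j
      rcases eq_or_ne i j with rfl | hj
      · simp only [Finsupp.add_apply, Finsupp.tsub_apply, Finsupp.single_eq_same]
        omega
      · simp [Finsupp.add_apply, Finsupp.tsub_apply, Finsupp.single_eq_of_ne' hj]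
    have hsum : ((m - Finsupp.single i 1).sum fun _ e => e) + 1 = m.sum fun _ e => e := by
      conv_rhs => rw [← hadd]
      rw [Finsupp.sum_add_index' (fun _ => rfl) (fun _ _ _ => rfl),
        Finsupp.sum_single_index rfl]
    have hm' : (m.sum fun _ e => e) ≤ f.totalDegree := le_totalDegree hm
    omega

lemma totalDegree_gammaOp_le (A : Matrix (Fin n) (Fin n) R) (f : MvPolynomial (Fin n) R) :
    (gammaOp A f).totalDegree ≤ f.totalDegree - 1 := by
  unfold gammaOp
  refine (totalDegree_smul_le _ _).trans ?_
  refine (totalDegree_finset_sum _ _).trans (Finset.sup_le fun i _ => ?_)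
  refine (totalDegree_finset_sum _ _).trans (Finset.sup_le fun j _ => ?_)
  refine (totalDegree_smul_le _ _).trans ?_
  have h1 := totalDegree_pderiv_le i (pderiv j f)
  have h2 := totalDegree_pderiv_le j f
  omega

lemma gammaOp_eq_zero_of_deg (A : Matrix (Fin n) (Fin n) R) {f : MvPolynomial (Fin n) R}
    (h : f.totalDegree = 0) : gammaOp A f = 0 := by
  have hp : ∀ j : Fin n, pderiv j f = 0 := by
    intro j
    rw [f.as_sum, map_sum]
    refine Finset.sum_eq_zero fun m hm => ?_
    have : m j = 0 := (totalDegree_eq_zero_iff _ f).mp h m hm j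
    simp [pderiv_monomial, this]
  simp [gammaOp, hp]

lemma GOp_pow_totalDegree_le (A : Matrix (Fin n) (Fin n) R) (m : ℕ)
    (f : MvPolynomial (Fin n) R) :
    ((GOp A ^ m) f).totalDegree ≤ f.totalDegree - m := by
  induction m generalizing f with
  | zero => simp
  | succ m ih =>
    rw [pow_succ, Module.End.mul_apply]
    refine (ih _).trans ?_
    have := GOp_apply A f ▸ totalDegree_gammaOp_le A f
    omega

lemma GOp_pow_eq_zero (A : Matrix (Fin n) (Fin n) R) {m : ℕ} {f : MvPolynomial (Fin n) R}
    (h : f.totalDegree < m) : (GOp A ^ m) f = 0 := by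
  induction m generalizing f with
  | zero => omega
  | succ m ih =>
    rw [pow_succ, Module.End.mul_apply]
    by_cases h0 : f.totalDegree = 0
    · rw [GOp_apply, gammaOp_eq_zero_of_deg A h0, map_zero]
    · refine ih ?_
      have := GOp_apply A f ▸ totalDegree_gammaOp_le A f
      omega

lemma topT_eq_sum (A : Matrix (Fin n) (Fin n) R) (f : MvPolynomial (Fin n) R) {N : ℕ}
    (h : f.totalDegree < N) :
    topT A f = ∑ m ∈ Finset.range N, (m.factorial : ℚ)⁻¹ • (GOp A ^ m) f := by
  unfold topT
  rw [finsum_congr fun m => by rw [← GOp_coe, ← Module.End.pow_apply]]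
  refine finsum_eq_sum_of_support_subset _ fun m hm => ?_
  rw [Function.mem_support] at hm
  rw [Finset.coe_range, Set.mem_Iio]
  by_contra hge
  exact hm (by rw [GOp_pow_eq_zero A (lt_of_lt_of_le h (le_of_not_gt hge)), smul_zero])


lemma GOp_vanish (A B : Matrix (Fin n) (Fin n) R) (f : MvPolynomial (Fin n) R) {m k : ℕ}
    (h : f.totalDegree < m + k) : (GOp A ^ m) ((GOp B ^ k) f) = 0 := by
  by_cases hk : f.totalDegree < k
  · rw [GOp_pow_eq_zero B hk, map_zero]
  · exact GOp_pow_eq_zero A (lt_of_le_of_lt (GOp_pow_totalDegree_le B k f) (by omega))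

lemma key_scalar {p m : ℕ} (h : m ≤ p) :
    (p.factorial : ℚ)⁻¹ * (p.choose m : ℚ) = ((m.factorial * (p - m).factorial : ℕ) : ℚ)⁻¹ := by
  have hnat : p.choose m * (m.factorial * (p - m).factorial) = p.factorial := by
    rw [← Nat.choose_mul_factorial_mul_factorial h]; ring
  have hc : (p.choose m : ℚ) ≠ 0 := Nat.cast_ne_zero.mpr (Nat.choose_pos h).ne'
  have hX : (p.factorial : ℚ) = (p.choose m : ℚ) * ((m.factorial * (p - m).factorial : ℕ) : ℚ) := by
    exact_mod_cast (hnat.symm)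
  rw [hX, mul_inv, mul_comm ((p.choose m : ℚ))⁻¹, mul_assoc, inv_mul_cancel₀ hc, mul_one]

lemma topT_topT (A B : Matrix (Fin n) (Fin n) R) (f : MvPolynomial (Fin n) R) :
    topT A (topT B f) = topT (A + B) f := by
  classical
  have hfN : f.totalDegree < (f.totalDegree + 1) := Nat.lt_succ_self _
  have hB := topT_eq_sum B f hfN
  have hdegB : (topT B f).totalDegree < (f.totalDegree + 1) := by
    rw [hB]
    refine Nat.lt_succ_of_le ?_
    refine (totalDegree_finset_sum _ _).trans (Finset.sup_le fun k _ => ?_)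
    refine (totalDegree_smul_le _ _).trans ?_
    exact (GOp_pow_totalDegree_le B k f).trans (Nat.sub_le _ _)
  rw [topT_eq_sum A _ hdegB, topT_eq_sum (A + B) f hfN, hB]
  have hL : ∀ m ∈ Finset.range (f.totalDegree + 1),
      (m.factorial : ℚ)⁻¹ • (GOp A ^ m) (∑ k ∈ Finset.range (f.totalDegree + 1), (k.factorial : ℚ)⁻¹ • (GOp B ^ k) f)
      = ∑ k ∈ Finset.range (f.totalDegree + 1),
          ((m.factorial * k.factorial : ℕ) : ℚ)⁻¹ • (GOp A ^ m) ((GOp B ^ k) f) := by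
    intro m _
    rw [map_sum, Finset.smul_sum]
    refine Finset.sum_congr rfl fun k _ => ?_
    rw [LinearMap.map_smul_of_tower, ← mul_smul, ← mul_inv, ← Nat.cast_mul]
  rw [Finset.sum_congr rfl hL]
  have hR : ∀ p ∈ Finset.range (f.totalDegree + 1),
      (p.factorial : ℚ)⁻¹ • ((GOp A + GOp B) ^ p) f
      = ∑ m ∈ Finset.range (p + 1),
          ((m.factorial * (p - m).factorial : ℕ) : ℚ)⁻¹ • (GOp A ^ m) ((GOp B ^ (p - m)) f) := by
    intro p _
    rw [(GOp_commute A B).add_pow, LinearMap.sum_apply, Finset.smul_sum]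
    refine Finset.sum_congr rfl fun m hm => ?_
    have hmp : m ≤ p := Nat.lt_succ_iff.mp (Finset.mem_range.mp hm)
    rw [Module.End.mul_apply, Module.End.mul_apply, Module.End.natCast_apply,
      map_nsmul, map_nsmul, ← Nat.cast_smul_eq_nsmul ℚ, ← mul_smul, key_scalar hmp]
  rw [GOp_add, Finset.sum_congr rfl hR]
  -- now: reindex
  rw [← Finset.sum_product', Finset.sum_sigma']
  rw [← Finset.sum_filter_of_ne
    (p := fun x : ℕ × ℕ => x.1 + x.2 < f.totalDegree + 1)
    (fun x _ hx => by
      by_contra hge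
      exact hx (by
        rw [GOp_vanish A B f (m := x.1) (k := x.2) (by omega), smul_zero]))]
  refine (Finset.sum_nbij' (fun x : ℕ × ℕ => (⟨x.1 + x.2, x.1⟩ : Σ _ : ℕ, ℕ))
    (fun y : Σ _ : ℕ, ℕ => (y.2, y.1 - y.2)) ?_ ?_ ?_ ?_ ?_)
  · intro a ha
    simp only [Finset.mem_filter, Finset.mem_product, Finset.mem_range] at ha
    simp only [Finset.mem_sigma, Finset.mem_range]
    omega
  · intro b hb
    simp only [Finset.mem_sigma, Finset.mem_range] at hb
    simp only [Finset.mem_filter, Finset.mem_product, Finset.mem_range]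
    omega
  · intro a ha
    simp only [Finset.mem_filter, Finset.mem_product, Finset.mem_range] at ha
    simp only
    congr 1
    omega
  · intro b hb
    obtain ⟨p, m⟩ := b
    simp only [Finset.mem_sigma, Finset.mem_range] at hb
    simp only [Sigma.mk.inj_iff, heq_iff_eq]
    exact ⟨by omega, trivial⟩
  · intro a ha
    simp only [Finset.mem_filter, Finset.mem_product, Finset.mem_range] at ha
    have h : a.1 + a.2 - a.1 = a.2 := by omega
    simp only [h]

lemma topT_zero_apply (f : MvPolynomial (Fin n) R) :
    topT (0 : Matrix (Fin n) (Fin n) R) f = f := by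
  have hg : ∀ g : MvPolynomial (Fin n) R, gammaOp (0 : Matrix (Fin n) (Fin n) R) g = 0 := by
    intro g; simp [gammaOp]
  have hiter : ∀ m : ℕ, m ≠ 0 →
      (m.factorial : ℚ)⁻¹ • (gammaOp (0 : Matrix (Fin n) (Fin n) R))^[m] f = 0 := by
    intro m hm
    obtain ⟨k, rfl⟩ := Nat.exists_eq_succ_of_ne_zero hm
    rw [Function.iterate_succ_apply, hg]
    have : ∀ j : ℕ, (gammaOp (0 : Matrix (Fin n) (Fin n) R))^[j] (0 : MvPolynomial (Fin n) R)
        = 0 := by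
      intro j
      induction j with
      | zero => rfl
      | succ j ih => rw [Function.iterate_succ_apply, hg]; exact ih
    rw [this, smul_zero]
  unfold topT
  rw [finsum_eq_single _ 0 hiter]
  simp

lemma topT_addMatrix (A B : Matrix (Fin n) (Fin n) R) :
    topT A ∘ topT B = topT (A + B) :=
  funext fun f => topT_topT A B f

lemma topT_add (A : Matrix (Fin n) (Fin n) R) (f g : MvPolynomial (Fin n) R) :
    topT A (f + g) = topT A f + topT A g := by
  set N := max f.totalDegree g.totalDegree + 1 with hN
  have h1 : f.totalDegree < N := by omega
  have h2 : g.totalDegree < N := by omega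
  have h3 : (f + g).totalDegree < N :=
    lt_of_le_of_lt (totalDegree_add f g) (by omega)
  rw [topT_eq_sum A _ h3, topT_eq_sum A _ h1, topT_eq_sum A _ h2, ← Finset.sum_add_distrib]
  exact Finset.sum_congr rfl fun m _ => by rw [map_add, smul_add]

lemma topT_smul (A : Matrix (Fin n) (Fin n) R) (r : R) (f : MvPolynomial (Fin n) R) :
    topT A (r • f) = r • topT A f := by
  set N := f.totalDegree + 1 with hN
  have h1 : f.totalDegree < N := Nat.lt_succ_self _
  have h2 : (r • f).totalDegree < N :=
    lt_of_le_of_lt (totalDegree_smul_le r f) h1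
  rw [topT_eq_sum A _ h2, topT_eq_sum A _ h1, Finset.smul_sum]
  refine Finset.sum_congr rfl fun m _ => ?_
  rw [map_smul, smul_comm]

end TopTAux

/-- `T_A ∘ T_B = T_{A+B}`, `T_0 = id`; consequently each `T_A` is an `R`-linear
automorphism of `MvPolynomial (Fin n) R` with inverse `T_{-A}`. -/
theorem topT_comp_and_aut {n : ℕ} {R : Type*} [CommRing R] [Algebra ℚ R] :
    (∀ A B : Matrix (Fin n) (Fin n) R, topT A ∘ topT B = topT (A + B)) ∧
    topT (0 : Matrix (Fin n) (Fin n) R) = (id : MvPolynomial (Fin n) R → MvPolynomial (Fin n) R) ∧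
    (∀ A : Matrix (Fin n) (Fin n) R,
      IsLinearMap R (topT A) ∧ Function.Bijective (topT A) ∧
      topT (-A) ∘ topT A = id ∧ topT A ∘ topT (-A) = id) := by
  have hzero : topT (0 : Matrix (Fin n) (Fin n) R)
      = (id : MvPolynomial (Fin n) R → MvPolynomial (Fin n) R) :=
    funext fun f => TopTAux.topT_zero_apply f
  refine ⟨fun A B => TopTAux.topT_addMatrix A B, hzero, fun A => ?_⟩
  have h1 : topT (-A) ∘ topT A = id := by
    rw [TopTAux.topT_addMatrix, neg_add_cancel, hzero]
  have h2 : topT A ∘ topT (-A) = id := by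
    rw [TopTAux.topT_addMatrix, add_neg_cancel, hzero]
  refine ⟨⟨TopTAux.topT_add A, TopTAux.topT_smul A⟩, ?_, h1, h2⟩
  exact Function.bijective_iff_has_inverse.mpr
    ⟨topT (-A), Function.leftInverse_iff_comp.mpr h1, Function.rightInverse_iff_comp.mpr h2⟩
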